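/- There exists a set of 11 points in the projective Hjelmslev 3-space over S = 𝔽₂[X]/(X²) such that every hyperplane contains at most 4 of them; explicitly, the points spanned by (1,0,0,0), (0,1,0,0), (0,0,1,0), (0,0,0,1), (1,1,1,1), (X,1,X+1,X), (1,X,X+1,X+1), (1,X,1,X), (1,X+1,0,X), (1,X+1,X+1,0), (0,1,X,X+1) form such a set. -/

import Mathlib

/-- A point of a projective Hjelmslev geometry PHG(n-1, R): a free rank-1 submodule
of Rⁿ, i.e. the R-span of a vector having at least one unit coordinate. -/
def IsPoint {R : Type} [CommRing R] {n : ℕ} (P : Submodule R (Fin n → R)) : Prop :=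
  ∃ v : Fin n → R, (∃ i, IsUnit (v i)) ∧ P = Submodule.span R {v}

/-- A free rank-k submodule of Rⁿ: a submodule linearly isomorphic to Rᵏ. -/
def IsFreeRank {R : Type} [CommRing R] {n : ℕ} (k : ℕ) (L : Submodule R (Fin n → R)) : Prop :=
  Nonempty ((Fin k → R) ≃ₗ[R] L)

/-- A line of PHG(2, R): a free rank-2 submodule of R³. -/
abbrev IsLine {R : Type} [CommRing R] (L : Submodule R (Fin 3 → R)) : Prop := IsFreeRank 2 L

/-- A hyperplane of PHG(3, R): a free rank-3 submodule of R⁴. -/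
abbrev IsHyperplane {R : Type} [CommRing R] (H : Submodule R (Fin 4 → R)) : Prop := IsFreeRank 3 H

/-- The chain ring S = 𝔽₂[X]/(X²), the dual numbers over the field with 2 elements. -/
abbrev S2 := DualNumber (ZMod 2)

open DualNumber in
/-- The eleven listed points of PHG(3, 𝔽₂[X]/(X²)); here `eps` plays the role of X. -/
noncomputable def A11 : Set (Submodule S2 (Fin 4 → S2)) :=
  (fun v => Submodule.span S2 {v}) ''
    {![1,0,0,0], ![0,1,0,0], ![0,0,1,0], ![0,0,0,1], ![1,1,1,1],
     ![eps,1,eps+1,eps], ![1,eps,eps+1,eps+1], ![1,eps,1,eps],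
     ![1,eps+1,0,eps], ![1,eps+1,eps+1,0], ![0,1,eps,eps+1]}

set_option maxRecDepth 4000
section Arc
open DualNumber TrivSqZeroExt

instance : DecidableEq S2 := inferInstanceAs (DecidableEq (ZMod 2 × ZMod 2))
instance : Fintype S2 := inferInstanceAs (Fintype (ZMod 2 × ZMod 2))

def vv : Fin 11 → (Fin 4 → S2) :=
  ![![1,0,0,0], ![0,1,0,0], ![0,0,1,0], ![0,0,0,1], ![1,1,1,1],
    ![eps,1,eps+1,eps], ![1,eps,eps+1,eps+1], ![1,eps,1,eps],
    ![1,eps+1,0,eps], ![1,eps+1,eps+1,0], ![0,1,eps,eps+1]]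

lemma hA11 : A11 = (fun v => Submodule.span S2 {v}) '' Set.range vv := by
  have hs : ({![1,0,0,0], ![0,1,0,0], ![0,0,1,0], ![0,0,0,1], ![1,1,1,1],
     ![eps,1,eps+1,eps], ![1,eps,eps+1,eps+1], ![1,eps,1,eps],
     ![1,eps+1,0,eps], ![1,eps+1,eps+1,0], ![0,1,eps,eps+1]} : Set (Fin 4 → S2))
      = Set.range vv := by
    ext v
    simp only [Set.mem_insert_iff, Set.mem_singleton_iff, Set.mem_range]
    revert v
    decide
  unfold A11
  rw [hs]
set_option maxRecDepth 20000
lemma hdist : ∀ k l : Fin 11, (∃ c : S2, ∀ t, c * vv l t = vv k t) → k = l := by decide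
lemma hone : ∀ k : Fin 11, ∃ i, vv k i = 1 := by decide
lemma hcount : ∀ a : Fin 4 → S2, (∃ j, (a j).fst ≠ 0) →
    (Finset.univ.filter fun k : Fin 11 => (∑ j, a j * vv k j) = 0).card ≤ 4 := by decide
set_option synthInstance.maxHeartbeats 1000000
set_option maxHeartbeats 3000000

open Submodule in
lemma exists_functional {H : Submodule S2 (Fin 4 → S2)} (hH : IsHyperplane H) :
    ∃ a : Fin 4 → S2, (∃ j, (a j).fst ≠ 0) ∧ ∀ x ∈ H, (∑ j, a j * x j) = 0 := by
  classical
  obtain ⟨e⟩ := hH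
  set F : (Fin 3 → S2) →ₗ[S2] (Fin 4 → S2) := (Submodule.subtype H).comp (e : (Fin 3 → S2) →ₗ[S2] H) with hF
  set u : Fin 3 → (Fin 4 → S2) := fun k => F (fun j => if k = j then 1 else 0) with hu
  have he : ∀ c : Fin 3 → S2, F c = ∑ k, c k • u k := fun c =>
    LinearMap.pi_apply_eq_sum_univ F c
  have hspan : ∀ x ∈ H, ∃ c : Fin 3 → S2, x = ∑ k, c k • u k := by
    intro x hx
    refine ⟨e.symm ⟨x, hx⟩, ?_⟩
    rw [← he]
    simp [hF]
  have hfree : ∀ c : Fin 3 → S2, (∑ k, c k • u k) = 0 → c = 0 := by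
    intro c hc
    rw [← he] at hc
    have h1 : e c = 0 := by
      apply Subtype.ext
      simpa [hF] using hc
    simpa using e.injective (by simpa using h1)
  -- the determinant functional
  set M0 : Matrix (Fin 4) (Fin 4) S2 := Matrix.of ![u 0, u 1, u 2, 0] with hM0
  set L : (Fin 4 → S2) →ₗ[S2] S2 :=
    { toFun := fun x => (M0.updateRow (Fin.last 3) x).det
      map_add' := fun x y => Matrix.det_updateRow_add M0 3 x y
      map_smul' := fun c x => Matrix.det_updateRow_smul M0 3 c x } with hL
  have hLdef : ∀ x : Fin 4 → S2, L x = (M0.updateRow (Fin.last 3) x).det := fun _ => rfl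
  have hLu : ∀ k : Fin 3, L (u k) = 0 := by
    intro k
    rw [hLdef]
    refine Matrix.det_zero_of_row_eq (i := Fin.castSucc k) (j := Fin.last 3)
      (Fin.ne_of_lt (Fin.castSucc_lt_last k)) ?_
    rw [Matrix.updateRow_self, Matrix.updateRow_ne (Fin.ne_of_lt (Fin.castSucc_lt_last k))]
    fin_cases k <;> rfl
  have hLH : ∀ x ∈ H, L x = 0 := by
    intro x hx
    obtain ⟨c, rfl⟩ := hspan x hx
    rw [map_sum]
    simp [hLu]
  have hLx : ∀ x : Fin 4 → S2, L x = ∑ j, x j * L (fun t => if j = t then 1 else 0) := by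
    intro x
    simpa [smul_eq_mul] using LinearMap.pi_apply_eq_sum_univ L x
  refine ⟨fun j => L (fun t => if j = t then 1 else 0), ?_, ?_⟩
  swap
  · intro x hx
    have h6 := hLH x hx
    rw [hLx x] at h6
    refine Eq.trans ?_ h6
    exact Finset.sum_congr rfl fun j _ => mul_comm _ _
  -- unimodularity
  by_contra hcon
  push_neg at hcon
  -- reduced rows
  set r : Fin 3 → (Fin 4 → ZMod 2) := fun k t => (u k t).fst with hr
  have hind : LinearIndependent (ZMod 2) r := by
    rw [Fintype.linearIndependent_iff]
    intro g hg
    have h0 : (∑ k, (DualNumber.eps * TrivSqZeroExt.inl (g k)) • u k) = 0 := by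
      have hz : ∀ t, (∑ k, TrivSqZeroExt.inl (g k) * u k t : S2).fst = 0 := by
        intro t
        have h2 := congrFun hg t
        simp only [Finset.sum_apply, Pi.smul_apply, Pi.zero_apply] at h2
        rw [TrivSqZeroExt.fst_sum]
        simpa [TrivSqZeroExt.fst_mul, hr] using h2
      funext t
      have h3 : (∑ k, (DualNumber.eps * TrivSqZeroExt.inl (g k)) • u k) t
          = DualNumber.eps * ∑ k, TrivSqZeroExt.inl (g k) * u k t := by
        rw [Finset.mul_sum]
        simp only [Finset.sum_apply, Pi.smul_apply, smul_eq_mul, mul_assoc]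
      rw [h3]
      apply TrivSqZeroExt.ext
      · simp [TrivSqZeroExt.fst_mul]
      · simp [TrivSqZeroExt.snd_mul, hz t]
    have hc := hfree _ h0
    intro k
    have h4 := congrFun hc k
    simp only [Pi.zero_apply] at h4
    have h2 : (DualNumber.eps * TrivSqZeroExt.inl (g k) : S2).snd = 0 := by rw [h4]; rfl
    simpa [TrivSqZeroExt.snd_mul] using h2
  -- find a vector outside the span
  have hne : span (ZMod 2) (Set.range r) ≠ ⊤ := by
    intro htop
    have h1 := finrank_span_le_card (R := ZMod 2) (Set.range r)
    rw [htop] at h1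
    have h2 : (Set.range r).toFinset.card ≤ 3 := by
      rw [Set.toFinset_range]
      exact (Finset.card_image_le).trans (by simp)
    have h3 : Module.finrank (ZMod 2) (⊤ : Submodule (ZMod 2) (Fin 4 → ZMod 2)) = 4 := by
      simp [finrank_top]
    omega
  obtain ⟨w, hw⟩ : ∃ w, w ∉ span (ZMod 2) (Set.range r) := by
    by_contra hcon2
    push_neg at hcon2
    exact hne (Submodule.eq_top_iff'.mpr hcon2)
  have h4 : LinearIndependent (ZMod 2) (Fin.snoc r w : Fin 4 → Fin 4 → ZMod 2) :=
    linearIndependent_fin_snoc.mpr ⟨hind, hw⟩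
  have hsp := h4.span_eq_top_of_card_eq_finrank (by simp)
  have hdet : IsUnit ((Pi.basisFun (ZMod 2) (Fin 4)).det (Fin.snoc r w)) :=
    (Module.Basis.is_basis_iff_det _).mp ⟨h4, hsp⟩
  rw [Pi.basisFun_det] at hdet
  have hdet' : Matrix.det (Matrix.of (Fin.snoc r w)) ≠ 0 := by
    exact isUnit_iff_ne_zero.mp hdet
  -- lift w
  set x : Fin 4 → S2 := fun t => TrivSqZeroExt.inl (w t) with hx
  have hmap : (M0.updateRow (Fin.last 3) x).map (TrivSqZeroExt.fstHom (ZMod 2) (ZMod 2) (ZMod 2)).toRingHom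
      = Matrix.of (Fin.snoc r w) := by
    refine Matrix.ext fun i j => ?_
    induction i using Fin.lastCases with
    | last => simp [hx, Fin.snoc_last]; rfl
    | cast i =>
      rw [Matrix.map_apply, Matrix.updateRow_ne (Fin.ne_of_lt (Fin.castSucc_lt_last i))]
      show (M0 i.castSucc j).fst = (Fin.snoc r w : Fin 4 → Fin 4 → ZMod 2) i.castSucc j
      rw [Fin.snoc_castSucc]
      fin_cases i <;> rfl
  have hfstL : (L x).fst = ((M0.updateRow (Fin.last 3) x).map
      (TrivSqZeroExt.fstHom (ZMod 2) (ZMod 2) (ZMod 2)).toRingHom).det := by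
    rw [hLdef]
    have h7 := RingHom.map_det (TrivSqZeroExt.fstHom (ZMod 2) (ZMod 2) (ZMod 2)).toRingHom
      (M0.updateRow (Fin.last 3) x)
    rw [RingHom.mapMatrix_apply] at h7
    exact h7
  have h5 : (L x).fst ≠ 0 := by
    rw [hfstL, hmap]
    exact hdet'
  apply h5
  rw [hLx x, TrivSqZeroExt.fst_sum]
  refine Finset.sum_eq_zero fun j _ => ?_
  rw [TrivSqZeroExt.fst_mul, hcon j, mul_zero]


theorem eleven_four_arc_S2 :
    (∀ P ∈ A11, IsPoint P) ∧ A11.ncard = 11 ∧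
    ∀ H : Submodule S2 (Fin 4 → S2), IsHyperplane H → {P ∈ A11 | P ≤ H}.ncard ≤ 4 := by
  refine ⟨?_, ?_, ?_⟩
  · intro P hP
    rw [hA11] at hP
    obtain ⟨v, ⟨k, rfl⟩, rfl⟩ := hP
    obtain ⟨i, hi⟩ := hone k
    exact ⟨vv k, ⟨i, by rw [hi]; exact isUnit_one⟩, rfl⟩
  · have himg : A11 = (fun k : Fin 11 => Submodule.span S2 {vv k}) '' Set.univ := by
      rw [hA11, Set.image_univ, ← Set.range_comp]
      rfl
    have hinj : Set.InjOn (fun k : Fin 11 => Submodule.span S2 {vv k}) Set.univ := by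
      intro k _ l _ h
      apply hdist k l
      have h' : Submodule.span S2 {vv k} = Submodule.span S2 {vv l} := h
      have hm : vv k ∈ Submodule.span S2 {vv l} := by
        rw [← h']
        exact Submodule.mem_span_singleton_self _
      obtain ⟨c, hc⟩ := Submodule.mem_span_singleton.mp hm
      exact ⟨c, fun t => by simpa using congrFun hc t⟩
    rw [himg, Set.ncard_image_of_injOn hinj, Set.ncard_univ]
    simp
  · intro H hH
    obtain ⟨a, hun, ha⟩ := exists_functional hH
    set T : Finset (Fin 11) := Finset.univ.filter (fun k => (∑ j, a j * vv k j) = 0) with hT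
    have hsub : {P ∈ A11 | P ≤ H} ⊆ (fun k : Fin 11 => Submodule.span S2 {vv k}) '' ↑T := by
      rintro P ⟨hP, hPH⟩
      rw [hA11] at hP
      obtain ⟨v, ⟨k, rfl⟩, rfl⟩ := hP
      refine ⟨k, ?_, rfl⟩
      simp only [hT, Finset.coe_filter, Set.mem_setOf_eq, Finset.mem_univ, true_and]
      exact ha (vv k) (hPH (Submodule.mem_span_singleton_self _))
    calc {P ∈ A11 | P ≤ H}.ncard
        ≤ ((fun k : Fin 11 => Submodule.span S2 {vv k}) '' ↑T).ncard :=
          Set.ncard_le_ncard hsub (T.finite_toSet.image _)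
      _ ≤ (↑T : Set (Fin 11)).ncard := Set.ncard_image_le T.finite_toSet
      _ = T.card := Set.ncard_coe_finset T
      _ ≤ 4 := hcount a hun

end Arc
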